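/- Let $(U_t)_{t \geq 1}$ be independent $\mathbb{R}^d$-valued random vectors where each $U_t = h_t \tilde{U}_t$ with $\tilde{U}_t$ having a density bounded below by $c_1 > 0$ on the unit ball (uniformly in $t$), and $h_t \in (0, 1]$. Fix integers $a < b$ and $\delta_p > 0$ with $\delta_p / h_t \leq 1$ for all relevant $t$. Then $\mathbb{P}\Big(\big\|\sum_{j=s}^{b-1} U_j\big\|_\infty < d^{-1/2}\delta_p \text{ for all } s \in \{a+1, \dots, b-1\}\Big) \geq \prod_{s=a+1}^{b-1} \big(c_2\, (\delta_p/h_s)^d \wedge 1\big)$ for some constant $c_2 > 0$ depending only on $c_1$ and $d$. -/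

import Mathlib

open MeasureTheory ProbabilityTheory
open scoped ENNReal


lemma box_meas {d : ℕ} (m : Fin d → ℝ) (w : ℝ) :
    MeasurableSet {u : EuclideanSpace ℝ (Fin d) | ∀ i, u i ∈ Set.Ioo (m i - w) (m i + w)} := by
  have : {u : EuclideanSpace ℝ (Fin d) | ∀ i, u i ∈ Set.Ioo (m i - w) (m i + w)} =
      ⋂ i, (fun u : EuclideanSpace ℝ (Fin d) => u i) ⁻¹' Set.Ioo (m i - w) (m i + w) := by
    ext u; simp
  rw [this]
  exact MeasurableSet.iInter fun i => ((measurable_pi_apply i).comp (WithLp.measurable_ofLp 2 _)) measurableSet_Ioo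

lemma box_vol {d : ℕ} (m : Fin d → ℝ) (w : ℝ) :
    volume {u : EuclideanSpace ℝ (Fin d) | ∀ i, u i ∈ Set.Ioo (m i - w) (m i + w)} =
      ENNReal.ofReal (2 * w) ^ d := by
  have hE : {u : EuclideanSpace ℝ (Fin d) | ∀ i, u i ∈ Set.Ioo (m i - w) (m i + w)} =
      (MeasurableEquiv.toLp 2 (Fin d → ℝ)).symm ⁻¹'
        (Set.univ.pi fun i => Set.Ioo (m i - w) (m i + w)) := by
    ext u
    simp only [Set.mem_preimage, Set.mem_pi, Set.mem_univ, forall_true_left, Set.mem_setOf_eq]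
    rfl
  rw [hE, (EuclideanSpace.volume_preserving_symm_measurableEquiv_toLp (Fin d)).measure_preimage
    ((MeasurableSet.univ_pi fun i => measurableSet_Ioo).nullMeasurableSet),
    Real.volume_pi_Ioo]
  have : ∀ i : Fin d, ENNReal.ofReal (m i + w - (m i - w)) = ENNReal.ofReal (2 * w) := by
    intro i; ring_nf
  rw [Finset.prod_congr rfl fun i _ => this i, Finset.prod_const, Finset.card_univ,
    Fintype.card_fin]

lemma small_ball {d : ℕ} (hd : 0 < d) {c1 : ℝ} (hc1 : 0 ≤ c1)
    (ρ : EuclideanSpace ℝ (Fin d) → ℝ≥0∞)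
    (hρ : ∀ x, ‖x‖ ≤ 1 → ENNReal.ofReal c1 ≤ ρ x)
    {h r : ℝ} (hh0 : 0 < h) (hrpos : 0 < r) (hrh : Real.sqrt d * r ≤ h)
    (y : EuclideanSpace ℝ (Fin d)) (hy : ∀ i, |y i| < r) :
    ENNReal.ofReal (c1 * (r / h) ^ d) ≤
      (volume.withDensity ρ)
        {u : EuclideanSpace ℝ (Fin d) | ∀ i, |h * u i + y i| < r} := by
  have hd0 : (0:ℝ) < d := by exact_mod_cast hd
  set w := r / (2 * h) with hw
  have hwpos : 0 < w := div_pos hrpos (by linarith)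
  have hww : w + w = r / h := by rw [hw]; field_simp; ring
  have hhw : h * w = r / 2 := by rw [hw]; field_simp
  set m : Fin d → ℝ := fun i => -(y i) / (2 * h) with hm
  have hmabs : ∀ i, |m i| < w := by
    intro i
    rw [hm]
    simp only
    rw [abs_div, abs_neg, abs_of_pos (by linarith : (0:ℝ) < 2 * h), hw]
    gcongr
    exact hy i
  set Box := {u : EuclideanSpace ℝ (Fin d) | ∀ i, u i ∈ Set.Ioo (m i - w) (m i + w)} with hBox
  have hBm : MeasurableSet Box := box_meas m w
  have habs : ∀ u ∈ Box, ∀ i : Fin d, |u i - m i| < w ∧ |u i| < r / h := by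
    intro u hu i
    have h1 := hu i
    simp only [Set.mem_Ioo] at h1
    have h2 : |u i - m i| < w := abs_sub_lt_iff.mpr ⟨by linarith [h1.2], by linarith [h1.1]⟩
    refine ⟨h2, ?_⟩
    have h4 : |u i| - |m i| ≤ |u i - m i| := abs_sub_abs_le_abs_sub _ _
    have := hmabs i
    linarith
  have hsub1 : Box ⊆ {u : EuclideanSpace ℝ (Fin d) | ∀ i, |h * u i + y i| < r} := by
    intro u hu i
    have h2 := (habs u hu i).1
    have key : h * u i + y i = h * (u i - m i) + y i / 2 := by
      rw [hm]; simp only; field_simp; ring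
    calc |h * u i + y i| = |h * (u i - m i) + y i / 2| := by rw [key]
      _ ≤ |h * (u i - m i)| + |y i / 2| := abs_add_le _ _
      _ = h * |u i - m i| + |y i| / 2 := by
          rw [abs_mul, abs_of_pos hh0, abs_div]; norm_num
      _ < h * w + r / 2 := by
          have h5 : h * |u i - m i| ≤ h * w := by nlinarith
          have h6 : |y i| / 2 < r / 2 := by linarith [hy i]
          nlinarith [abs_nonneg (u i - m i)]
      _ = r := by rw [hhw]; ring
  have hsub2 : ∀ u ∈ Box, ‖u‖ ≤ 1 := by
    intro u hu
    have hb : ∀ i : Fin d, |u i| ≤ r / h := fun i => ((habs u hu i).2).le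
    have hnorm : ‖u‖ ≤ Real.sqrt d * (r / h) := by
      rw [EuclideanSpace.norm_eq]
      rw [show Real.sqrt d * (r / h) = Real.sqrt (d * (r / h) ^ 2) by
        rw [Real.sqrt_mul (by positivity), Real.sqrt_sq (by positivity)]]
      apply Real.sqrt_le_sqrt
      calc (∑ i : Fin d, ‖u i‖ ^ 2) ≤ ∑ _i : Fin d, (r / h) ^ 2 := by
            apply Finset.sum_le_sum
            intro i _
            have := hb i
            rw [Real.norm_eq_abs]
            nlinarith [abs_nonneg (u i)]
        _ = d * (r / h) ^ 2 := by rw [Finset.sum_const, Finset.card_univ, Fintype.card_fin,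
              nsmul_eq_mul]
    have h7 : Real.sqrt d * (r / h) ≤ 1 := by
      rw [mul_div_assoc']
      rw [div_le_one hh0]
      exact hrh
    linarith
  calc ENNReal.ofReal (c1 * (r / h) ^ d)
      = ENNReal.ofReal c1 * ENNReal.ofReal (2 * w) ^ d := by
        rw [ENNReal.ofReal_mul hc1, ENNReal.ofReal_pow (by positivity)]
        congr 2
        rw [← hww]; ring
    _ = ENNReal.ofReal c1 * volume Box := by rw [box_vol]
    _ = ∫⁻ _u in Box, ENNReal.ofReal c1 := (setLIntegral_const _ _).symm
    _ ≤ ∫⁻ u in Box, ρ u := setLIntegral_mono' hBm fun x hx => hρ x (hsub2 x hx)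
    _ = (volume.withDensity ρ) Box := (withDensity_apply ρ hBm).symm
    _ ≤ _ := measure_mono hsub1

/-- small-ball lower bound: if `U_t = h_t Ũ_t` with the `Ũ_t` independent, each
having a Lebesgue density bounded below by `c₁` on the (Euclidean) unit ball, `h_t ∈ (0,1]`,
and `δ_p/h_t ≤ 1` on the relevant range, then there is `c₂ > 0` (depending only on `c₁` and `d`)
such that
`P(‖∑_{j=s}^{b-1} U_j‖_∞ < d^{-1/2} δ_p for all a < s < b) ≥ ∏_{s=a+1}^{b-1} (c₂ (δ_p/h_s)^d ∧ 1)`. -/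
theorem stmt_18 {Ω : Type*} [MeasurableSpace Ω]
    (P : Measure Ω) [IsProbabilityMeasure P]
    (d : ℕ) (hd : 0 < d) (c1 : ℝ) (hc1 : 0 < c1) :
    ∃ c2 : ℝ, 0 < c2 ∧
      ∀ (h : ℕ → ℝ) (Ut : ℕ → Ω → EuclideanSpace ℝ (Fin d))
        (ρ : ℕ → EuclideanSpace ℝ (Fin d) → ℝ≥0∞) (a b : ℕ) (δp : ℝ),
        (∀ t, h t ∈ Set.Ioc (0 : ℝ) 1) →
        (∀ t, Measurable (Ut t)) →
        iIndepFun Ut P →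
        (∀ t, Measure.map (Ut t) P = volume.withDensity (ρ t)) →
        (∀ t (x : EuclideanSpace ℝ (Fin d)), ‖x‖ ≤ 1 → ENNReal.ofReal c1 ≤ ρ t x) →
        a < b → 0 < δp →
        (∀ t ∈ Finset.Ioo a b, δp / h t ≤ 1) →
        ENNReal.ofReal (∏ s ∈ Finset.Ioo a b, min (c2 * (δp / h s) ^ d) 1) ≤
          P {ω | ∀ s ∈ Finset.Ioo a b, ∀ i : Fin d,
            |(∑ j ∈ Finset.Ico s b, h j • Ut j ω) i| < (d : ℝ) ^ (-(1 : ℝ) / 2) * δp} := by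
  have hd0 : (0:ℝ) < d := by exact_mod_cast hd
  refine ⟨c1 * ((d:ℝ) ^ (-(1:ℝ)/2)) ^ d, by positivity, ?_⟩
  intro h Ut ρ a b δp hh hUm hind hmap hρ hab hδ hδh
  set r := (d:ℝ) ^ (-(1:ℝ)/2) * δp with hrdef
  have hrpos : 0 < r := mul_pos (Real.rpow_pos_of_pos hd0 _) hδ
  have hsr : Real.sqrt d * r = δp := by
    rw [hrdef, ← mul_assoc, Real.sqrt_eq_rpow, ← Real.rpow_add hd0]
    norm_num
  have key : ∀ n s, a < s → s + n = b →
      ENNReal.ofReal (∏ t ∈ Finset.Ico s b,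
          min (c1 * ((d:ℝ) ^ (-(1:ℝ)/2)) ^ d * (δp / h t) ^ d) 1) ≤
        P {ω | ∀ t ∈ Finset.Ico s b, ∀ i : Fin d,
          |(∑ j ∈ Finset.Ico t b, h j • Ut j ω) i| < r} := by
    intro n
    induction n with
    | zero =>
      intro s has hsb
      have : s = b := by omega
      subst this
      simp only [Finset.Ico_self, Finset.prod_empty, Finset.notMem_empty,
        false_implies, implies_true, Set.setOf_true, measure_univ, ENNReal.ofReal_one, le_refl]
    | succ n ih =>
      intro s has hsb
      have hsb' : s < b := by omega
      have ih' := ih (s + 1) (by omega) (by omega)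
      -- abbreviations
      set J := Finset.Ico (s + 1) b with hJ
      set T : Ω → (↥J → EuclideanSpace ℝ (Fin d)) := fun ω j => Ut j ω with hT
      have hTm : Measurable T := measurable_pi_lambda _ fun j => hUm j
      set F : ℕ → (↥J → EuclideanSpace ℝ (Fin d)) → EuclideanSpace ℝ (Fin d) :=
        fun t v => ∑ j ∈ J.attach.filter (fun j : ↥J => t ≤ (j:ℕ)), h (j:ℕ) • v j with hF
      have hFm : ∀ t, Measurable (F t) := by
        intro t
        exact Finset.measurable_sum _ fun j _ => Measurable.const_smul (g := fun v : ↥J → EuclideanSpace ℝ (Fin d) => v j) (measurable_pi_apply j) (h j)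
      have hFT : ∀ t, s + 1 ≤ t → ∀ ω, F t (T ω) = ∑ j ∈ Finset.Ico t b, h j • Ut j ω := by
        intro t ht ω
        rw [hF]
        simp only
        rw [Finset.sum_filter,
          Finset.sum_attach J (fun j => if t ≤ j then h j • Ut j ω else 0),
          ← Finset.sum_filter]
        congr 1
        ext x
        simp only [Finset.mem_filter, Finset.mem_Ico, hJ]
        omega
      set D : Set (↥J → EuclideanSpace ℝ (Fin d)) :=
        {v | ∀ t ∈ Finset.Ico (s + 1) b, ∀ i : Fin d, |(F t v) i| < r} with hD
      have hDm : MeasurableSet D := by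
        have : D = ⋂ t ∈ Finset.Ico (s + 1) b, ⋂ i : Fin d,
            (fun v => (F t v) i) ⁻¹' {x : ℝ | |x| < r} := by
          ext v; simp [hD]
        rw [this]
        refine MeasurableSet.biInter (Finset.Ico (s+1) b).countable_toSet fun t _ =>
          MeasurableSet.iInter fun i => ?_
        exact ((measurable_pi_apply i).comp ((WithLp.measurable_ofLp 2 _).comp (hFm t))) (measurableSet_lt measurable_abs measurable_const)
      set C : Set (EuclideanSpace ℝ (Fin d) × (↥J → EuclideanSpace ℝ (Fin d))) :=
        {p | (∀ i : Fin d, |(h s • p.1 + F (s+1) p.2) i| < r) ∧ p.2 ∈ D} with hC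
      have hsumMeas : Measurable fun p : EuclideanSpace ℝ (Fin d) × (↥J → EuclideanSpace ℝ (Fin d)) =>
          h s • p.1 + F (s+1) p.2 :=
        Measurable.add (Measurable.const_smul (g := fun p : EuclideanSpace ℝ (Fin d) × (↥J → EuclideanSpace ℝ (Fin d)) => p.1) measurable_fst (h s)) ((hFm (s+1)).comp measurable_snd)
      have hCm : MeasurableSet C := by
        have : C = (⋂ i : Fin d, (fun p : EuclideanSpace ℝ (Fin d) × (↥J → EuclideanSpace ℝ (Fin d)) =>
            ((h s • p.1 + F (s+1) p.2) i)) ⁻¹' {x : ℝ | |x| < r}) ∩ (Prod.snd ⁻¹' D) := by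
          ext p; simp [hC]
        rw [this]
        exact (MeasurableSet.iInter fun i =>
          ((measurable_pi_apply i).comp ((WithLp.measurable_ofLp 2 _).comp hsumMeas)) (measurableSet_lt measurable_abs measurable_const)).inter
          (measurable_snd hDm)
      -- event equality
      have hevent : {ω | ∀ t ∈ Finset.Ico s b, ∀ i : Fin d,
            |(∑ j ∈ Finset.Ico t b, h j • Ut j ω) i| < r} =
          (fun ω => (Ut s ω, T ω)) ⁻¹' C := by
        ext ω
        simp only [Set.mem_setOf_eq, Set.mem_preimage, hC, hD]
        constructor
        · intro hw
          refine ⟨?_, ?_⟩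
          · intro i
            have h1 := hw s (by simp [Finset.mem_Ico]; omega) i
            rw [Finset.sum_eq_sum_Ico_succ_bot hsb'] at h1
            rwa [hFT (s+1) le_rfl ω]
          · intro t ht i
            rw [hFT t (Finset.mem_Ico.mp ht).1 ω]
            exact hw t (by simp only [Finset.mem_Ico] at ht ⊢; omega) i
        · rintro ⟨h1, h2⟩ t ht i
          rcases Nat.eq_or_lt_of_le (Finset.mem_Ico.mp ht).1 with heq | hlt
          · subst heq
            have := h1 i
            rw [hFT (s+1) le_rfl ω] at this
            rwa [Finset.sum_eq_sum_Ico_succ_bot hsb']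
          · have := h2 t (by simp only [Finset.mem_Ico] at ht ⊢; omega) i
            rwa [hFT t hlt ω] at this
      have heventB : {ω | ∀ t ∈ Finset.Ico (s+1) b, ∀ i : Fin d,
            |(∑ j ∈ Finset.Ico t b, h j • Ut j ω) i| < r} = T ⁻¹' D := by
        ext ω
        simp only [Set.mem_setOf_eq, Set.mem_preimage, hD]
        constructor
        · intro hw t ht i
          rw [hFT t (Finset.mem_Ico.mp ht).1 ω]
          exact hw t ht i
        · intro hw t ht i
          have := hw t ht i
          rwa [hFT t (Finset.mem_Ico.mp ht).1 ω] at this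
      -- independence
      have hindXT : IndepFun (Ut s) T P := by
        have hdisj : Disjoint ({s} : Finset ℕ) J := by
          simp only [Finset.disjoint_left, Finset.mem_singleton, hJ, Finset.mem_Ico]
          omega
        have h0 := hind.indepFun_finset {s} J hdisj hUm
        have h1 := h0.comp (measurable_pi_apply (⟨s, by simp⟩ : ({s} : Finset ℕ))) measurable_id
        exact h1
      have hpair : Measurable fun ω => (Ut s ω, T ω) := (hUm s).prodMk hTm
      haveI : IsProbabilityMeasure (Measure.map T P) := Measure.isProbabilityMeasure_map hTm.aemeasurable
      haveI : IsProbabilityMeasure (Measure.map (Ut s) P) :=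
        Measure.isProbabilityMeasure_map (hUm s).aemeasurable
      have hmapeq : Measure.map (fun ω => (Ut s ω, T ω)) P =
          (Measure.map (Ut s) P).prod (Measure.map T P) :=
        (indepFun_iff_map_prod_eq_prod_map_map (hUm s).aemeasurable hTm.aemeasurable).mp hindXT
      -- the constant
      set K := ENNReal.ofReal (c1 * (r / h s) ^ d) with hK
      -- slice lower bound
      have hslice : ∀ v, D.indicator (fun _ => K) v ≤
          (Measure.map (Ut s) P) ((fun u => (u, v)) ⁻¹' C) := by
        intro v
        by_cases hv : v ∈ D
        · rw [Set.indicator_of_mem hv]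
          have hsetv : ((fun u => (u, v)) ⁻¹' C) =
              {u : EuclideanSpace ℝ (Fin d) | ∀ i, |h s * u i + (F (s+1) v) i| < r} := by
            ext u
            simp only [Set.mem_preimage, hC, Set.mem_setOf_eq, hv, and_true]
            constructor <;> intro hu i <;> have := hu i <;>
              simpa [PiLp.add_apply, PiLp.smul_apply, smul_eq_mul] using this
          rw [hsetv, hmap s, hK]
          have hy : ∀ i : Fin d, |(F (s+1) v) i| < r := by
            rcases Nat.eq_or_lt_of_le (Nat.succ_le_of_lt hsb') with heq | hlt
            · -- s + 1 = b : J empty, F = 0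
              intro i
              have : F (s+1) v = 0 := by
                rw [hF]
                simp only
                apply Finset.sum_eq_zero
                intro j hj
                exfalso
                have hjm : (j : ℕ) ∈ Finset.Ico (s+1) b := j.2
                rw [Finset.mem_Ico] at hjm
                omega
              rw [this]
              simpa using hrpos
            · exact hv (s+1) (by simp [Finset.mem_Ico]; omega) 
          have hhs := hh s
          have hδhs : δp ≤ h s := by
            have := hδh s (by simp [Finset.mem_Ioo]; omega)
            rw [div_le_one hhs.1] at this
            exact this
          exact small_ball hd hc1.le (ρ s) (hρ s) hhs.1 hrpos (by rw [hsr]; exact hδhs) _ hy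
        · rw [Set.indicator_of_notMem hv]
          exact zero_le
      -- compute
      calc ENNReal.ofReal (∏ t ∈ Finset.Ico s b,
              min (c1 * ((d:ℝ) ^ (-(1:ℝ)/2)) ^ d * (δp / h t) ^ d) 1)
          = ENNReal.ofReal (min (c1 * ((d:ℝ) ^ (-(1:ℝ)/2)) ^ d * (δp / h s) ^ d) 1 *
              ∏ t ∈ Finset.Ico (s+1) b,
                min (c1 * ((d:ℝ) ^ (-(1:ℝ)/2)) ^ d * (δp / h t) ^ d) 1) := by
            rw [Finset.prod_eq_prod_Ico_succ_bot hsb']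
        _ = ENNReal.ofReal (min (c1 * ((d:ℝ) ^ (-(1:ℝ)/2)) ^ d * (δp / h s) ^ d) 1) *
              ENNReal.ofReal (∏ t ∈ Finset.Ico (s+1) b,
                min (c1 * ((d:ℝ) ^ (-(1:ℝ)/2)) ^ d * (δp / h t) ^ d) 1) := by
            rw [ENNReal.ofReal_mul]
            exact le_min (by have := (hh s).1; positivity) zero_le_one
        _ ≤ K * P {ω | ∀ t ∈ Finset.Ico (s+1) b, ∀ i : Fin d,
              |(∑ j ∈ Finset.Ico t b, h j • Ut j ω) i| < r} := by
            apply mul_le_mul'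
            · rw [hK]
              apply ENNReal.ofReal_le_ofReal
              refine le_trans (min_le_left _ _) (le_of_eq ?_)
              rw [mul_assoc, ← mul_pow, hrdef]
              congr 2
              rw [mul_div_assoc]
            · exact ih'
        _ = K * (Measure.map T P) D := by
            rw [Measure.map_apply hTm hDm, ← heventB]
        _ = ∫⁻ v, D.indicator (fun _ => K) v ∂(Measure.map T P) := by
            rw [lintegral_indicator_const hDm]
        _ ≤ ∫⁻ v, (Measure.map (Ut s) P) ((fun u => (u, v)) ⁻¹' C) ∂(Measure.map T P) :=
            lintegral_mono hslice
        _ = ((Measure.map (Ut s) P).prod (Measure.map T P)) C :=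
            (Measure.prod_apply_symm hCm).symm
        _ = P {ω | ∀ t ∈ Finset.Ico s b, ∀ i : Fin d,
              |(∑ j ∈ Finset.Ico t b, h j • Ut j ω) i| < r} := by
            rw [← hmapeq, Measure.map_apply hpair hCm, ← hevent]
  have := key (b - (a + 1)) (a + 1) (by omega) (by omega)
  rwa [Finset.Ico_add_one_left_eq_Ioo] at this
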